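/- arXiv:2604.15509 — 2 statements merged into one kernel-verified Lean document; each statement's English description precedes it below -/
import Mathlib

section
/- Let c₁,…,c₆ ∈ ℝ² and d₁,d₂,d₃ ∈ ℝ be coefficients of v(x,y) = c₁ + c₂x + c₃y + c₄x² + c₅y² + c₆xy (vector-valued) and q(x,y) = d₁ + d₂x + d₃y. Suppose: (a) v(η_k,0) = 0 for three distinct reals η₁,η₂,η₃; (b) the traction (∇v + ∇vᵀ − qI)·(0,1)ᵀ vanishes at (ζ_k, 0) for two distinct reals ζ₁,ζ₂; (c) div v vanishes at (ξ₁,0), (ξ₂,0) with ξ₁ ≠ ξ₂ and at (0, ξ₃) with ξ₃ ≠ 0; (d) Δv − c²v − ∇q = 0 at the origin, for some constant c² ≥ 0. Then all coefficients vanish: c₁ = ⋯ = c₆ = 0 and d₁ = d₂ = d₃ = 0. -/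
private lemma dY' (a b c d e f x t : ℝ) :
    deriv (fun y => a + b*x + c*y + d*x^2 + e*y^2 + f*x*y) t = c + 2*e*t + f*x := by
  have h1 : HasDerivAt (fun y : ℝ => y) 1 t := hasDerivAt_id t
  have h2 : HasDerivAt (fun y : ℝ => y^2) (2*t) t := by simpa using hasDerivAt_pow 2 t
  have h := (((h1.const_mul c).add (h2.const_mul e)).add (h1.const_mul (f*x))).const_add
    (a + b*x + d*x^2)
  have h' : HasDerivAt (fun y => a + b*x + c*y + d*x^2 + e*y^2 + f*x*y) (c + 2*e*t + f*x) t := by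
    convert h using 1
    · rfl
    · rfl
    · ext y; simp only [Pi.add_apply]; ring
    · ring
  exact h'.deriv

private lemma dX' (a b c d e f y t : ℝ) :
    deriv (fun x => a + b*x + c*y + d*x^2 + e*y^2 + f*x*y) t = b + 2*d*t + f*y := by
  have h1 : HasDerivAt (fun x : ℝ => x) 1 t := hasDerivAt_id t
  have h2 : HasDerivAt (fun x : ℝ => x^2) (2*t) t := by simpa using hasDerivAt_pow 2 t
  have h := (((h1.const_mul b).add (h2.const_mul d)).add (h1.const_mul (f*y))).const_add
    (a + c*y + e*y^2)
  have h' : HasDerivAt (fun x => a + b*x + c*y + d*x^2 + e*y^2 + f*x*y) (b + 2*d*t + f*y) t := by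
    convert h using 1
    · rfl
    · rfl
    · ext x; simp only [Pi.add_apply]; ring
    · ring
  exact h'.deriv

private lemma dlin3' (p r s t : ℝ) : deriv (fun u => p + r*u + s) t = r := by
  have h1 : HasDerivAt (fun u : ℝ => u) 1 t := hasDerivAt_id t
  have h : HasDerivAt (fun u => p + r*u + s) r t := by
    have := ((h1.const_mul r).const_add p).add_const s
    convert this using 1; rfl; rfl; ring
  exact h.deriv

private lemma dlinB' (p s r t : ℝ) : deriv (fun u => p + s + r*u) t = r := by
  have h1 : HasDerivAt (fun u : ℝ => u) 1 t := hasDerivAt_id t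
  have h : HasDerivAt (fun u => p + s + r*u) r t := by
    have := (h1.const_mul r).const_add (p + s)
    convert this using 1
    rfl
    rfl
    ring
  exact h.deriv

private lemma ddX' (a b c d e f y : ℝ) :
    iteratedDeriv 2 (fun x => a + b*x + c*y + d*x^2 + e*y^2 + f*x*y) 0 = 2*d := by
  rw [iteratedDeriv_succ, iteratedDeriv_one]
  have h : deriv (fun x => a + b*x + c*y + d*x^2 + e*y^2 + f*x*y)
      = fun t => b + 2*d*t + f*y := funext fun t => dX' a b c d e f y t
  rw [h, dlin3']

private lemma ddY' (a b c d e f x : ℝ) :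
    iteratedDeriv 2 (fun y => a + b*x + c*y + d*x^2 + e*y^2 + f*x*y) 0 = 2*e := by
  rw [iteratedDeriv_succ, iteratedDeriv_one]
  have h : deriv (fun y => a + b*x + c*y + d*x^2 + e*y^2 + f*x*y)
      = fun t => c + 2*e*t + f*x := funext fun t => dY' a b c d e f x t
  rw [h, dlin3']

private lemma lin_zero' {a b x1 x2 : ℝ} (hx : x1 ≠ x2)
    (h1 : a + b*x1 = 0) (h2 : a + b*x2 = 0) : a = 0 ∧ b = 0 := by
  have hb : b = 0 := by
    have h3 : b * (x1 - x2) = 0 := by linear_combination h1 - h2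
    rcases mul_eq_zero.1 h3 with h | h
    · exact h
    · exact absurd (sub_eq_zero.1 h) hx
  exact ⟨by linear_combination h1 - x1 * hb, hb⟩

private lemma quad_zero' {a b c x1 x2 x3 : ℝ} (h12 : x1 ≠ x2) (h13 : x1 ≠ x3) (h23 : x2 ≠ x3)
    (h1 : a + b*x1 + c*x1^2 = 0) (h2 : a + b*x2 + c*x2^2 = 0)
    (h3 : a + b*x3 + c*x3^2 = 0) : a = 0 ∧ b = 0 ∧ c = 0 := by
  have e12 : (b + c*(x1+x2)) * (x1 - x2) = 0 := by linear_combination h1 - h2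
  have e13 : (b + c*(x1+x3)) * (x1 - x3) = 0 := by linear_combination h1 - h3
  have f12 : b + c*(x1+x2) = 0 :=
    (mul_eq_zero.1 e12).resolve_right (sub_ne_zero.2 h12)
  have f13 : b + c*(x1+x3) = 0 :=
    (mul_eq_zero.1 e13).resolve_right (sub_ne_zero.2 h13)
  have hc : c = 0 := by
    have g : c * (x2 - x3) = 0 := by linear_combination f12 - f13
    exact (mul_eq_zero.1 g).resolve_right (sub_ne_zero.2 h23)
  have hbb : b = 0 := by linear_combination f12 - (x1 + x2) * hc
  exact ⟨by linear_combination h1 - x1 * hbb - x1^2 * hc, hbb, hc⟩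

/-- Kernel-triviality of the 15×15 collocation system for the local Cauchy
problem on the straight interface `y = 0`. -/
theorem stmt7 (c1 c2 c3 c4 c5 c6 : ℝ × ℝ) (d1 d2 d3 csq : ℝ) (hcsq : 0 ≤ csq)
    (v1 v2 q : ℝ → ℝ → ℝ)
    (hv1 : v1 = fun x y =>
      c1.1 + c2.1 * x + c3.1 * y + c4.1 * x ^ 2 + c5.1 * y ^ 2 + c6.1 * x * y)
    (hv2 : v2 = fun x y =>
      c1.2 + c2.2 * x + c3.2 * y + c4.2 * x ^ 2 + c5.2 * y ^ 2 + c6.2 * x * y)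
    (hq : q = fun x y => d1 + d2 * x + d3 * y)
    (η₁ η₂ η₃ ζ₁ ζ₂ ξ₁ ξ₂ ξ₃ : ℝ)
    (hη12 : η₁ ≠ η₂) (hη13 : η₁ ≠ η₃) (hη23 : η₂ ≠ η₃)
    (hζ : ζ₁ ≠ ζ₂) (hξ : ξ₁ ≠ ξ₂) (hξ₃ : ξ₃ ≠ 0)
    -- (a) Dirichlet conditions at three distinct points on the line
    (ha : ∀ η ∈ ({η₁, η₂, η₃} : Set ℝ), v1 η 0 = 0 ∧ v2 η 0 = 0)
    -- (b) traction (∇v + ∇vᵀ − qI)(0,1)ᵀ = 0 at (ζₖ, 0)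
    (hb : ∀ ζ ∈ ({ζ₁, ζ₂} : Set ℝ),
      deriv (fun y => v1 ζ y) 0 + deriv (fun x => v2 x 0) ζ = 0 ∧
      2 * deriv (fun y => v2 ζ y) 0 - q ζ 0 = 0)
    -- (c) divergence-free at (ξ₁,0), (ξ₂,0) and (0,ξ₃)
    (hc1 : ∀ ξ ∈ ({ξ₁, ξ₂} : Set ℝ),
      deriv (fun x => v1 x 0) ξ + deriv (fun y => v2 ξ y) 0 = 0)
    (hc2 : deriv (fun x => v1 x ξ₃) 0 + deriv (fun y => v2 0 y) ξ₃ = 0)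
    -- (d) Δv − c²v − ∇q = 0 at the origin
    (hd1 : iteratedDeriv 2 (fun x => v1 x 0) 0 + iteratedDeriv 2 (fun y => v1 0 y) 0
      - csq * v1 0 0 - deriv (fun x => q x 0) 0 = 0)
    (hd2 : iteratedDeriv 2 (fun x => v2 x 0) 0 + iteratedDeriv 2 (fun y => v2 0 y) 0
      - csq * v2 0 0 - deriv (fun y => q 0 y) 0 = 0) :
    c1 = 0 ∧ c2 = 0 ∧ c3 = 0 ∧ c4 = 0 ∧ c5 = 0 ∧ c6 = 0 ∧
    d1 = 0 ∧ d2 = 0 ∧ d3 = 0 := by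
  subst hv1 hv2 hq
  have ha1 := ha η₁ (by simp)
  have ha2 := ha η₂ (by simp)
  have ha3 := ha η₃ (by simp)
  have hb1 := hb ζ₁ (by simp)
  have hb2 := hb ζ₂ (by simp)
  have hc11 := hc1 ξ₁ (by simp)
  have hc12 := hc1 ξ₂ (by simp)
  simp only [dY', dX', dlin3', dlinB', ddX', ddY'] at hb1 hb2 hc11 hc12 hc2 hd1 hd2
  simp only at ha1 ha2 ha3 hd1 hd2
  -- component 1 of v on the line
  obtain ⟨p1, p2, p4⟩ := quad_zero' (a := c1.1) (b := c2.1) (c := c4.1) hη12 hη13 hη23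
    (by linear_combination ha1.1) (by linear_combination ha2.1) (by linear_combination ha3.1)
  obtain ⟨q1, q2, q4⟩ := quad_zero' (a := c1.2) (b := c2.2) (c := c4.2) hη12 hη13 hη23
    (by linear_combination ha1.2) (by linear_combination ha2.2) (by linear_combination ha3.2)
  -- (b) first component: c3.1 + c6.1 ζ = 0
  obtain ⟨p3, p6⟩ := lin_zero' (a := c3.1) (b := c6.1) hζ
    (by linear_combination hb1.1 - q2 - 2*ζ₁*q4) (by linear_combination hb2.1 - q2 - 2*ζ₂*q4)
  -- (c1): c3.2 + c6.2 ξ = 0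
  obtain ⟨q3, q6⟩ := lin_zero' (a := c3.2) (b := c6.2) hξ
    (by linear_combination hc11 - p2 - 2*ξ₁*p4) (by linear_combination hc12 - p2 - 2*ξ₂*p4)
  -- (b) second component gives d1, d2
  obtain ⟨r1, r2⟩ := lin_zero' (a := d1) (b := d2) hζ
    (by linear_combination 2*q3 + 2*ζ₁*q6 - hb1.2) (by linear_combination 2*q3 + 2*ζ₂*q6 - hb2.2)
  -- (c2): c5.2 = 0
  have q5 : c5.2 = 0 := by
    have h : c5.2 * (2 * ξ₃) = 0 := by linear_combination hc2 - p2 - ξ₃*p6 - q3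
    rcases mul_eq_zero.1 h with h | h
    · exact h
    · exact absurd h (by simpa using hξ₃)
  -- (d)
  have p5 : c5.1 = 0 := by linear_combination (hd1 + csq * p1 + r2 - 2*p4) / 2
  have r3 : d3 = 0 := by linear_combination 2*q4 + 2*q5 - csq*q1 - hd2
  refine ⟨?_, ?_, ?_, ?_, ?_, ?_, r1, r2, r3⟩ <;>
    simp only [Prod.ext_iff, Prod.fst_zero, Prod.snd_zero] <;>
    exact ⟨by assumption, by assumption⟩
end

section
/- Let A = D − L − U be a square matrix decomposition with D diagonal, L strictly lower triangular, U strictly upper triangular, and suppose A is strictly diagonally dominant by rows. Then D − L is invertible, and the Gauss–Seidel iteration matrix G = (D − L)⁻¹U satisfies ‖G‖_∞ < 1; hence the Gauss–Seidel iteration x^{m+1} = x^m + (D−L)⁻¹(b − A x^m) converges to the unique solution of Ax = b for any initial guess. -/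
open Matrix Finset Filter

/-- Gauss–Seidel convergence for strictly row-diagonally dominant matrices. -/
theorem stmt18 {n : ℕ} (A D L U : Matrix (Fin n) (Fin n) ℝ)
    (hdom : ∀ i, (∑ j ∈ Finset.univ.erase i, |A i j|) < |A i i|)
    (hD : ∀ i j, D i j = if i = j then A i i else 0)
    (hL : ∀ i j, L i j = if j < i then -(A i j) else 0)
    (hU : ∀ i j, U i j = if i < j then -(A i j) else 0)
    (b : Fin n → ℝ) :
    IsUnit (D - L) ∧
    (∃ γ : ℝ, γ < 1 ∧ ∀ i, (∑ j, |((D - L)⁻¹ * U) i j|) ≤ γ) ∧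
    ∃ xsol : Fin n → ℝ, A.mulVec xsol = b ∧ (∀ y, A.mulVec y = b → y = xsol) ∧
      ∀ x0 : Fin n → ℝ,
        Filter.Tendsto
          (fun m => (fun x => x + (D - L)⁻¹.mulVec (b - A.mulVec x))^[m] x0)
          Filter.atTop (nhds xsol) := by
  classical
  set M : Matrix (Fin n) (Fin n) ℝ := D - L with hMdef
  have hMij : ∀ i j, M i j = if j ≤ i then A i j else 0 := by
    intro i j
    simp only [hMdef, Matrix.sub_apply, hD, hL]
    rcases lt_trichotomy i j with h | h | h
    · rw [if_neg h.ne, if_neg (asymm h), if_neg h.not_ge]; ring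
    · subst h; rw [if_pos rfl, if_neg (lt_irrefl i), if_pos le_rfl]; ring
    · rw [if_neg h.ne', if_pos h, if_pos h.le]; ring
  have habs : ∀ i, 0 < |A i i| := by
    intro i
    calc (0:ℝ) ≤ ∑ j ∈ Finset.univ.erase i, |A i j| :=
          Finset.sum_nonneg fun j _ => abs_nonneg _
      _ < |A i i| := hdom i
  have hdetM : M.det = ∏ i, A i i := by
    have htri : M.BlockTriangular OrderDual.toDual := by
      intro i j h
      rw [hMij]
      exact if_neg (not_le.mpr h)
    rw [Matrix.det_of_lowerTriangular M htri]
    exact Finset.prod_congr rfl fun i _ => by rw [hMij, if_pos le_rfl]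
  have hdet : IsUnit M.det := by
    rw [hdetM, isUnit_iff_ne_zero]
    exact Finset.prod_ne_zero_iff.mpr fun i _ => fun h => (habs i).ne' (by simp [h])
  have hMunit : IsUnit M := (Matrix.isUnit_iff_isUnit_det M).mpr hdet
  set G : Matrix (Fin n) (Fin n) ℝ := M⁻¹ * U with hGdef
  have hMG : M * G = U := by
    rw [hGdef, ← mul_assoc, Matrix.mul_nonsing_inv M hdet, one_mul]
  -- entrywise relation
  have hrel : ∀ i j, A i i * G i j =
      U i j - ∑ k ∈ Finset.univ.filter (· < i), A i k * G k j := by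
    intro i j
    have h1 : (M * G) i j = ∑ k ∈ Finset.univ.filter (· ≤ i), A i k * G k j := by
      rw [Matrix.mul_apply]
      rw [Finset.sum_filter]
      apply Finset.sum_congr rfl
      intro k _
      rw [hMij]
      split_ifs <;> simp
    have h2 : Finset.univ.filter (· ≤ i) =
        insert i (Finset.univ.filter (· < (i : Fin n))) := by
      ext k
      simp only [Finset.mem_filter, Finset.mem_insert, Finset.mem_univ, true_and]
      constructor
      · intro h; rcases eq_or_lt_of_le h with h' | h'
        · exact Or.inl h'
        · exact Or.inr h'
      · rintro (rfl | h); exacts [le_rfl, h.le]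
    have h3 : i ∉ Finset.univ.filter (· < (i : Fin n)) := by simp
    rw [hMG] at h1
    rw [h2, Finset.sum_insert h3] at h1
    linarith [h1]
  set p : Fin n → ℝ := fun i => ∑ k ∈ Finset.univ.filter (· < i), |A i k| with hp
  set q : Fin n → ℝ := fun i => ∑ k ∈ Finset.univ.filter (i < ·), |A i k| with hq
  have hpq : ∀ i, p i + q i = ∑ j ∈ Finset.univ.erase i, |A i j| := by
    intro i
    have e1 : (Finset.univ.erase i).filter (· < i)
        = Finset.univ.filter (· < i) := by
      ext k
      simp only [Finset.mem_filter, Finset.mem_erase, Finset.mem_univ, true_and, and_true]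
      exact ⟨fun h => h.2, fun h => ⟨h.ne, h⟩⟩
    have e2 : (Finset.univ.erase i).filter (fun k => ¬ k < i)
        = Finset.univ.filter (i < ·) := by
      ext k
      simp only [Finset.mem_filter, Finset.mem_erase, Finset.mem_univ, true_and, and_true]
      constructor
      · rintro ⟨hne, hnl⟩
        exact lt_of_le_of_ne (not_lt.mp hnl) (Ne.symm hne)
      · intro h; exact ⟨h.ne', not_lt.mpr h.le⟩
    show (∑ k ∈ Finset.univ.filter (· < i), |A i k|)
        + (∑ k ∈ Finset.univ.filter (i < ·), |A i k|) = _
    rw [← Finset.sum_filter_add_sum_filter_not (Finset.univ.erase i)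
      (· < i) (fun k => |A i k|), e1, e2]
  have hpnn : ∀ i, 0 ≤ p i := fun i => Finset.sum_nonneg fun _ _ => abs_nonneg _
  have hqnn : ∀ i, 0 ≤ q i := fun i => Finset.sum_nonneg fun _ _ => abs_nonneg _
  have hdenom : ∀ i, 0 < |A i i| - p i := by
    intro i
    have := hdom i
    rw [← hpq i] at this
    linarith [hqnn i]
  -- the contraction constant
  set K : NNReal := Finset.univ.sup
    (fun i : Fin n => ⟨q i / (|A i i| - p i), div_nonneg (hqnn i) (hdenom i).le⟩) with hK
  have hK1 : K < 1 := by
    rw [hK]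
    apply Finset.sup_lt_iff (by norm_num : (⊥ : NNReal) < 1) |>.mpr
    intro i _
    refine NNReal.coe_lt_coe.mp ?_
    show q i / (|A i i| - p i) < 1
    rw [div_lt_one (hdenom i)]
    have := hdom i
    rw [← hpq i] at this
    linarith
  have hKq : ∀ i, q i ≤ (K : ℝ) * (|A i i| - p i) := by
    intro i
    have hle := Finset.le_sup (f := fun i : Fin n =>
      (⟨q i / (|A i i| - p i), div_nonneg (hqnn i) (hdenom i).le⟩ : NNReal))
      (Finset.mem_univ i)
    replace hle : _ ≤ K := hle
    have : q i / (|A i i| - p i) ≤ (K : ℝ) := hle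
    calc q i = q i / (|A i i| - p i) * (|A i i| - p i) :=
          (div_mul_cancel₀ _ (hdenom i).ne').symm
      _ ≤ (K : ℝ) * (|A i i| - p i) :=
          mul_le_mul_of_nonneg_right this (hdenom i).le
  -- row sums of |U|
  have hUrow : ∀ i, (∑ j, |U i j|) = q i := by
    intro i
    show _ = ∑ k ∈ Finset.univ.filter (i < ·), |A i k|
    rw [Finset.sum_filter]
    apply Finset.sum_congr rfl
    intro j _
    rw [hU]
    split_ifs <;> simp
  -- row sum bound by strong induction
  have hrow : ∀ i, (∑ j, |G i j|) ≤ (K : ℝ) := by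
    have main : ∀ m : ℕ, ∀ i : Fin n, (i : ℕ) = m → (∑ j, |G i j|) ≤ (K : ℝ) := by
      intro m
      induction m using Nat.strong_induction_on with
      | _ m IHm =>
      intro i him
      have IH : ∀ k : Fin n, k < i → (∑ j, |G k j|) ≤ (K : ℝ) := by
        intro k hk
        exact IHm (k : ℕ) (him ▸ hk) k rfl
      have key : |A i i| * (∑ j, |G i j|) ≤
          q i + ∑ k ∈ Finset.univ.filter (· < i), |A i k| * (∑ j, |G k j|) := by
        have step : ∀ j, |A i i| * |G i j| ≤
            |U i j| + ∑ k ∈ Finset.univ.filter (· < i), |A i k| * |G k j| := by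
          intro j
          rw [← abs_mul, hrel i j]
          calc |U i j - ∑ k ∈ Finset.univ.filter (· < i), A i k * G k j|
              ≤ |U i j| + |∑ k ∈ Finset.univ.filter (· < i), A i k * G k j| :=
                abs_sub _ _
            _ ≤ |U i j| + ∑ k ∈ Finset.univ.filter (· < i), |A i k * G k j| := by
                gcongr
                exact Finset.abs_sum_le_sum_abs _ _
            _ = |U i j| + ∑ k ∈ Finset.univ.filter (· < i), |A i k| * |G k j| := by
                simp [abs_mul]
        calc |A i i| * (∑ j, |G i j|) = ∑ j, |A i i| * |G i j| := by
              rw [Finset.mul_sum]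
          _ ≤ ∑ j, (|U i j| + ∑ k ∈ Finset.univ.filter (· < i), |A i k| * |G k j|) :=
              Finset.sum_le_sum fun j _ => step j
          _ = (∑ j, |U i j|) +
              ∑ j, ∑ k ∈ Finset.univ.filter (· < i), |A i k| * |G k j| := by
              rw [Finset.sum_add_distrib]
          _ = q i + ∑ k ∈ Finset.univ.filter (· < i), |A i k| * (∑ j, |G k j|) := by
              rw [hUrow, Finset.sum_comm]
              congr 1
              exact Finset.sum_congr rfl fun k _ => by rw [Finset.mul_sum]
      have bound : |A i i| * (∑ j, |G i j|) ≤ (K : ℝ) * |A i i| := by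
        calc |A i i| * (∑ j, |G i j|)
            ≤ q i + ∑ k ∈ Finset.univ.filter (· < i), |A i k| * (∑ j, |G k j|) := key
          _ ≤ (K : ℝ) * (|A i i| - p i) +
              ∑ k ∈ Finset.univ.filter (· < i), |A i k| * (K : ℝ) := by
              gcongr with k hk
              · exact hKq i
              · exact IH k (Finset.mem_filter.mp hk).2
          _ = (K : ℝ) * (|A i i| - p i) + p i * (K : ℝ) := by
              rw [hp, Finset.sum_mul]
          _ = (K : ℝ) * |A i i| := by ring
      have := habs i
      nlinarith [bound, this]
    intro i
    exact main (i : ℕ) i rfl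
  refine ⟨hMunit, ⟨(K : ℝ), by exact_mod_cast hK1, hrow⟩, ?_⟩
  -- the iteration as an affine map
  set f : (Fin n → ℝ) → (Fin n → ℝ) :=
    fun x => x + M⁻¹.mulVec (b - A.mulVec x) with hfdef
  have hAMU : A = M - U := by
    ext i j
    rw [Matrix.sub_apply, hMij, hU]
    rcases lt_trichotomy i j with h | h | h
    · rw [if_neg (not_le.mpr h), if_pos h]; ring
    · subst h; rw [if_pos le_rfl, if_neg (lt_irrefl i)]; ring
    · rw [if_pos h.le, if_neg (asymm h)]; ring
  have hfeq : ∀ x, f x = G.mulVec x + M⁻¹.mulVec b := by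
    intro x
    rw [hfdef]
    have h1 : M⁻¹.mulVec (b - A.mulVec x) =
        M⁻¹.mulVec b - M⁻¹.mulVec (A.mulVec x) := Matrix.mulVec_sub _ _ _
    have h2 : M⁻¹.mulVec (A.mulVec x) = (M⁻¹ * A).mulVec x :=
      Matrix.mulVec_mulVec _ _ _
    have h3 : M⁻¹ * A = 1 - G := by
      rw [hAMU, Matrix.mul_sub, Matrix.nonsing_inv_mul M hdet, hGdef]
    have h4 : (M⁻¹ * A).mulVec x = x - G.mulVec x := by
      rw [h3, Matrix.sub_mulVec, Matrix.one_mulVec]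
    simp only [h1, h2, h4]
    abel
  -- Lipschitz bound
  have hGv : ∀ v : Fin n → ℝ, ‖G.mulVec v‖ ≤ (K : ℝ) * ‖v‖ := by
    intro v
    have hnn : 0 ≤ (K : ℝ) * ‖v‖ := mul_nonneg K.coe_nonneg (norm_nonneg v)
    rw [pi_norm_le_iff_of_nonneg hnn]
    intro i
    calc ‖G.mulVec v i‖ = |∑ j, G i j * v j| := by rw [Matrix.mulVec, dotProduct]; rfl
      _ ≤ ∑ j, |G i j * v j| := Finset.abs_sum_le_sum_abs _ _
      _ = ∑ j, |G i j| * |v j| := by simp [abs_mul]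
      _ ≤ ∑ j, |G i j| * ‖v‖ :=
          Finset.sum_le_sum fun j _ =>
            mul_le_mul_of_nonneg_left (norm_le_pi_norm v j) (abs_nonneg _)
      _ = (∑ j, |G i j|) * ‖v‖ := by rw [Finset.sum_mul]
      _ ≤ (K : ℝ) * ‖v‖ := mul_le_mul_of_nonneg_right (hrow i) (norm_nonneg v)
  have hlip : LipschitzWith K f := by
    apply LipschitzWith.of_dist_le_mul
    intro x y
    have hsub : f x - f y = G.mulVec (x - y) := by
      rw [hfeq x, hfeq y, Matrix.mulVec_sub]
      abel
    rw [dist_eq_norm, dist_eq_norm, hsub]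
    exact hGv (x - y)
  have hcon : ContractingWith K f := ⟨hK1, hlip⟩
  set xsol := hcon.fixedPoint f with hxs
  have hfix : Function.IsFixedPt f xsol := hcon.fixedPoint_isFixedPt
  have hMinv : ∀ v : Fin n → ℝ, M⁻¹.mulVec v = 0 → v = 0 := by
    intro v hv
    have := congrArg (M.mulVec) hv
    rwa [Matrix.mulVec_mulVec, Matrix.mul_nonsing_inv M hdet, Matrix.one_mulVec,
      Matrix.mulVec_zero] at this
  have hsol : A.mulVec xsol = b := by
    have h0 : M⁻¹.mulVec (b - A.mulVec xsol) = 0 := by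
      have := hfix
      rw [Function.IsFixedPt, hfdef] at this
      have h := congrArg (· - xsol) this
      simpa using h
    have := hMinv _ h0
    rw [sub_eq_zero] at this
    exact this.symm
  have huniq : ∀ y, A.mulVec y = b → y = xsol := by
    intro y hy
    apply hcon.fixedPoint_unique
    rw [Function.IsFixedPt, hfdef]
    simp [hy]
  refine ⟨xsol, hsol, huniq, fun x0 => ?_⟩
  exact hcon.tendsto_iterate_fixedPoint x0
end
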